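/- Let λ₁ and λ₂ be finite Borel measures on a compact metric space X, let T : X → Y be a measurable map into a measurable space Y whose σ-algebra is countably generated and contains all singleton sets, and let μ be a σ-finite measure on Y with T_*λ₁ ≪ μ and T_*λ₂ ≪ μ. Let (λ_t^1) and (λ_t^2) be (T,μ)-disintegrations of λ₁ and λ₂ respectively. Assume λ₁ ≪ λ₂ and λ₂ ≪ λ₁, and let g be a measurable function with λ₁ = λ₂.withDensity g (a Radon–Nikodym derivative of λ₁ with respect to λ₂). Then for μ-a.e. t one has λ_t^1 ≪ λ_t^2, λ_t^2 ≪ λ_t^1, and λ_t^1 = (λ_t^2).withDensity g. -/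

import Mathlib

open MeasureTheory ENNReal

/-- A `(T, μ)`-disintegration of a measure `ν` on `X`. -/
def IsDisintegration {X Y : Type*} [MeasurableSpace X] [MeasurableSpace Y]
    (ν : Measure X) (T : X → Y) (μ : Measure Y) (lam : Y → Measure X) : Prop :=
  (∀ᵐ t ∂μ, lam t ((T ⁻¹' {t})ᶜ) = 0) ∧
  (∀ f : X → ℝ≥0∞, Measurable f →
      AEMeasurable (fun t => ∫⁻ x, f x ∂(lam t)) μ) ∧
  (∀ f : X → ℝ≥0∞, Measurable f →
      ∫⁻ x, f x ∂ν = ∫⁻ t, ∫⁻ x, f x ∂(lam t) ∂μ)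

lemma countable_generatePiSystem {α : Type*} {S : Set (Set α)} (hS : S.Countable) :
    (generatePiSystem S).Countable := by
  refine Set.Countable.mono ?_
    ((Set.countable_setOf_finite_subset hS).image (fun F => ⋂₀ F))
  intro t ht
  induction ht with
  | base h =>
      exact ⟨{_}, ⟨Set.finite_singleton _, by simpa⟩, Set.sInter_singleton _⟩
  | inter h1 h2 hne ih1 ih2 =>
      obtain ⟨F, ⟨hFfin, hFS⟩, rfl⟩ := ih1
      obtain ⟨G, ⟨hGfin, hGS⟩, rfl⟩ := ih2
      exact ⟨F ∪ G, ⟨hFfin.union hGfin, Set.union_subset hFS hGS⟩, Set.sInter_union F G⟩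

/-- Key identity: for a disintegration, integrating the fiber integrals over a
measurable set `B ⊆ Y` recovers the integral over `T ⁻¹' B`. -/
lemma IsDisintegration.setLIntegral {X Y : Type*} [MeasurableSpace X] [MeasurableSpace Y]
    [MeasurableSingletonClass Y]
    {ν : Measure X} {T : X → Y} (hT : Measurable T) {μ : Measure Y} {lam : Y → Measure X}
    (h : IsDisintegration ν T μ lam) {f : X → ℝ≥0∞} (hf : Measurable f)
    {B : Set Y} (hB : MeasurableSet B) :
    ∫⁻ t in B, (∫⁻ x, f x ∂(lam t)) ∂μ = ∫⁻ x in T ⁻¹' B, f x ∂ν := by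
  have hF : Measurable ((T ⁻¹' B).indicator f) := hf.indicator (hT hB)
  have h3 := h.2.2 _ hF
  rw [lintegral_indicator (hT hB)] at h3
  rw [h3, ← lintegral_indicator hB]
  refine lintegral_congr_ae ?_
  filter_upwards [h.1] with t ht
  by_cases htB : t ∈ B
  · rw [Set.indicator_of_mem htB]
    refine lintegral_congr_ae ?_
    have hnull : lam t ((T ⁻¹' B)ᶜ) = 0 :=
      measure_mono_null (Set.compl_subset_compl.2
        (Set.preimage_mono (Set.singleton_subset_iff.2 htB))) ht
    filter_upwards [(measure_eq_zero_iff_ae_notMem.1 hnull)] with x hx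
    simp only [Set.mem_compl_iff, not_not] at hx
    exact (Set.indicator_of_mem hx f).symm
  · rw [Set.indicator_of_notMem htB, lintegral_indicator (hT hB)]
    have hsub : T ⁻¹' B ⊆ (T ⁻¹' {t})ᶜ := by
      intro x hx hx'
      exact htB (Set.mem_singleton_iff.1 hx' ▸ hx)
    have hnull : lam t (T ⁻¹' B) = 0 := measure_mono_null hsub ht
    rw [setLIntegral_measure_zero _ _ hnull]

lemma IsDisintegration.aemeasurable_meas {X Y : Type*} [MeasurableSpace X] [MeasurableSpace Y]
    {ν : Measure X} {T : X → Y} {μ : Measure Y} {lam : Y → Measure X}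
    (h : IsDisintegration ν T μ lam) {A : Set X} (hA : MeasurableSet A) :
    AEMeasurable (fun t => lam t A) μ := by
  have := h.2.1 (A.indicator 1) (measurable_one.indicator hA)
  simpa only [lintegral_indicator_one hA] using this

lemma IsDisintegration.lintegral_meas {X Y : Type*} [MeasurableSpace X] [MeasurableSpace Y]
    {ν : Measure X} {T : X → Y} {μ : Measure Y} {lam : Y → Measure X}
    (h : IsDisintegration ν T μ lam) {A : Set X} (hA : MeasurableSet A) :
    ∫⁻ t, lam t A ∂μ = ν A := by
  have := (h.2.2 (A.indicator 1) (measurable_one.indicator hA)).symm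
  simpa only [lintegral_indicator_one hA] using this

theorem disintegration_absolutelyContinuous_withDensity
    {X Y : Type*} [MetricSpace X] [CompactSpace X]
    [MeasurableSpace X] [BorelSpace X]
    [MeasurableSpace Y] [MeasurableSpace.CountablyGenerated Y] [MeasurableSingletonClass Y]
    (ν₁ ν₂ : Measure X) [IsFiniteMeasure ν₁] [IsFiniteMeasure ν₂]
    (T : X → Y) (hT : Measurable T)
    (μ : Measure Y) [SigmaFinite μ]
    (habs₁ : ν₁.map T ≪ μ) (habs₂ : ν₂.map T ≪ μ)
    (lam₁ lam₂ : Y → Measure X)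
    (hdis₁ : IsDisintegration ν₁ T μ lam₁)
    (hdis₂ : IsDisintegration ν₂ T μ lam₂)
    (h₁₂ : ν₁ ≪ ν₂) (h₂₁ : ν₂ ≪ ν₁)
    (g : X → ℝ≥0∞) (hg : Measurable g) (hgd : ν₁ = ν₂.withDensity g) :
    ∀ᵐ t ∂μ, lam₁ t ≪ lam₂ t ∧ lam₂ t ≪ lam₁ t ∧ lam₁ t = (lam₂ t).withDensity g := by
  haveI : MeasurableSpace.CountablyGenerated X := inferInstance
  set S := MeasurableSpace.countableGeneratingSet X with hS
  set C := generatePiSystem S with hC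
  have hgenC : MeasurableSpace.generateFrom C = ‹MeasurableSpace X› := by
    rw [hC, generateFrom_generatePiSystem_eq,
      MeasurableSpace.generateFrom_countableGeneratingSet]
  have measC : ∀ A ∈ C, MeasurableSet A := fun A hA => by
    rw [← hgenC]; exact MeasurableSpace.measurableSet_generateFrom hA
  -- a.e. equality on each fixed measurable set
  have key : ∀ A : Set X, MeasurableSet A →
      ∀ᵐ t ∂μ, lam₁ t A = (lam₂ t).withDensity g A := by
    intro A hA
    have hAg : Measurable (A.indicator g) := hg.indicator hA
    have e₁ : ∀ t, lam₁ t A = ∫⁻ x, A.indicator (1 : X → ℝ≥0∞) x ∂(lam₁ t) := fun t =>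
      (lintegral_indicator_one hA).symm
    have e₂ : ∀ t, (lam₂ t).withDensity g A = ∫⁻ x, A.indicator g x ∂(lam₂ t) := fun t => by
      rw [withDensity_apply _ hA, lintegral_indicator hA]
    have h1 : AEMeasurable (fun t => lam₁ t A) μ := hdis₁.aemeasurable_meas hA
    have h2 : AEMeasurable (fun t => (lam₂ t).withDensity g A) μ := by
      have := hdis₂.2.1 (A.indicator g) hAg
      exact this.congr (Filter.EventuallyEq.of_eq (funext fun t => (e₂ t).symm))
    refine ae_eq_of_forall_setLIntegral_eq_of_sigmaFinite₀ h1 h2 (fun B hB _ => ?_)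
    have l1 : ∫⁻ t in B, lam₁ t A ∂μ = ν₁ (A ∩ T ⁻¹' B) := by
      calc ∫⁻ t in B, lam₁ t A ∂μ
          = ∫⁻ t in B, ∫⁻ x, A.indicator (1 : X → ℝ≥0∞) x ∂(lam₁ t) ∂μ := by
            exact setLIntegral_congr_fun hB (fun t _ => e₁ t)
        _ = ∫⁻ x in T ⁻¹' B, A.indicator (1 : X → ℝ≥0∞) x ∂ν₁ :=
            hdis₁.setLIntegral hT (measurable_one.indicator hA) hB
        _ = (ν₁.restrict (T ⁻¹' B)) A := lintegral_indicator_one hA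
        _ = ν₁ (A ∩ T ⁻¹' B) := Measure.restrict_apply hA
    have l2 : ∫⁻ t in B, (lam₂ t).withDensity g A ∂μ = ν₁ (A ∩ T ⁻¹' B) := by
      calc ∫⁻ t in B, (lam₂ t).withDensity g A ∂μ
          = ∫⁻ t in B, ∫⁻ x, A.indicator g x ∂(lam₂ t) ∂μ := by
            exact setLIntegral_congr_fun hB (fun t _ => e₂ t)
        _ = ∫⁻ x in T ⁻¹' B, A.indicator g x ∂ν₂ := hdis₂.setLIntegral hT hAg hB
        _ = ∫⁻ x, (T ⁻¹' B).indicator (A.indicator g) x ∂ν₂ :=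
            (lintegral_indicator (hT hB) _).symm
        _ = ∫⁻ x, (A ∩ T ⁻¹' B).indicator g x ∂ν₂ := by
            rw [Set.indicator_indicator, Set.inter_comm]
        _ = ∫⁻ x in A ∩ T ⁻¹' B, g x ∂ν₂ := lintegral_indicator (hA.inter (hT hB)) _
        _ = ν₁ (A ∩ T ⁻¹' B) := by rw [hgd, withDensity_apply _ (hA.inter (hT hB))]
    rw [l1, l2]
  -- a.e. equality on the countable π-system and on `univ`
  have hCcount : C.Countable :=
    countable_generatePiSystem MeasurableSpace.countable_countableGeneratingSet
  have hCall : ∀ᵐ t ∂μ, ∀ A ∈ C, lam₁ t A = (lam₂ t).withDensity g A :=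
    (ae_ball_iff hCcount).2 fun A hA => key A (measC A hA)
  have huniv : ∀ᵐ t ∂μ, lam₁ t Set.univ = (lam₂ t).withDensity g Set.univ :=
    key Set.univ MeasurableSet.univ
  -- a.e. finiteness
  have hfin₁ : ∀ᵐ t ∂μ, lam₁ t Set.univ < ∞ := by
    refine ae_lt_top' (hdis₁.aemeasurable_meas MeasurableSet.univ) ?_
    rw [hdis₁.lintegral_meas MeasurableSet.univ]
    exact measure_ne_top ν₁ _
  -- a.e. positivity of g along the fibers
  have hgset : MeasurableSet {x | g x = 0} := hg (measurableSet_singleton 0)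
  have hg0 : ∀ᵐ t ∂μ, lam₂ t {x | g x = 0} = 0 := by
    have hν₁0 : ν₁ {x | g x = 0} = 0 := by
      rw [hgd, withDensity_apply _ hgset]
      rw [setLIntegral_congr_fun hgset
        (fun x hx => (hx : g x = 0))]
      simp
    have hν₂0 : ν₂ {x | g x = 0} = 0 := h₂₁ hν₁0
    have hint : ∫⁻ t, lam₂ t {x | g x = 0} ∂μ = 0 := by
      rw [hdis₂.lintegral_meas hgset, hν₂0]
    exact (lintegral_eq_zero_iff' (hdis₂.aemeasurable_meas hgset)).1 hint
  -- combine
  filter_upwards [hCall, huniv, hfin₁, hg0] with t h1 h2 h3 h5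
  have heq : lam₁ t = (lam₂ t).withDensity g := by
    haveI : IsFiniteMeasure (lam₁ t) := ⟨h3⟩
    exact ext_of_generate_finite C hgenC.symm (isPiSystem_generatePiSystem S) h1 h2
  have hgne : ∀ᵐ x ∂(lam₂ t), g x ≠ 0 := by
    rw [ae_iff]
    simpa using h5
  exact ⟨heq ▸ withDensity_absolutelyContinuous (lam₂ t) g,
    heq ▸ withDensity_absolutelyContinuous' hg.aemeasurable hgne, heq⟩
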